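/- Let f : ℝ² → ℝ be convex, let K = [a₁, a₁+r] × [a₂, a₂+r] be an axis-aligned square (r > 0), let l₁ = { (x, a₂ + r/2) : x ∈ [a₁, a₁+r] } be its horizontal midline, and let Q = [a₁, a₁+r] × [a₂+r/2, a₂+r] and Z = [a₁, a₁+r] × [a₂, a₂+r/2] be the two closed halves of K determined by l₁. Suppose x₀ ∈ l₁ is a point where f attains its minimum over l₁, and suppose f attains its minimum over K at some point x* ∈ Z. Then f(x₀) = min_{x∈Q} f(x); that is, the minimizer of f on the midline also minimizes f over the half Q not containing x*. -/
import Mathlib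


/-- The closed axis-aligned rectangle `[a₁, a₁+w] × [a₂, a₂+h]` in the Euclidean plane. -/
def rect2 (a₁ a₂ w h : ℝ) : Set (EuclideanSpace ℝ (Fin 2)) :=
  {x | x 0 ∈ Set.Icc a₁ (a₁ + w) ∧ x 1 ∈ Set.Icc a₂ (a₂ + h)}

/-- Let `f` be convex on `ℝ²`, `K` the square `[a₁,a₁+r] × [a₂,a₂+r]` with horizontal
midline `l₁`, upper half `Q` and lower half `Z`. If `x₀` minimizes `f` over `l₁` and the
minimum of `f` over `K` is attained at some `x* ∈ Z`, then `f(x₀)` equals the minimum of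
`f` over `Q`. -/
theorem midline_minimizer_minimizes_half (r : ℝ) (hr : 0 < r) (a₁ a₂ : ℝ)
    (f : EuclideanSpace ℝ (Fin 2) → ℝ) (hconv : ConvexOn ℝ Set.univ f)
    (l₁ : Set (EuclideanSpace ℝ (Fin 2)))
    (hl₁ : l₁ = {x | x 0 ∈ Set.Icc a₁ (a₁ + r) ∧ x 1 = a₂ + r / 2})
    (Q Z : Set (EuclideanSpace ℝ (Fin 2)))
    (hQ : Q = rect2 a₁ (a₂ + r / 2) r (r / 2)) (hZ : Z = rect2 a₁ a₂ r (r / 2))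
    (x₀ : EuclideanSpace ℝ (Fin 2)) (hx₀l : x₀ ∈ l₁) (hx₀min : IsMinOn f l₁ x₀)
    (xs : EuclideanSpace ℝ (Fin 2)) (hxsZ : xs ∈ Z)
    (hxsmin : IsMinOn f (rect2 a₁ a₂ r r) xs) :
    f x₀ = sInf (f '' Q) := by
  subst hl₁ hQ hZ
  have hx₀min' := isMinOn_iff.mp hx₀min
  have hxsmin' := isMinOn_iff.mp hxsmin
  obtain ⟨hx₀0, hx₀1⟩ := hx₀l
  have hx₀Q : x₀ ∈ rect2 a₁ (a₂ + r / 2) r (r / 2) := by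
    refine ⟨hx₀0, ?_⟩
    rw [hx₀1]
    constructor <;> [linarith; linarith]
  obtain ⟨hxs0, hxs1⟩ := hxsZ
  have key : ∀ y ∈ rect2 a₁ (a₂ + r / 2) r (r / 2), f x₀ ≤ f y := by
    intro y hy
    obtain ⟨hy0, hy1⟩ := hy
    rcases eq_or_lt_of_le hy1.1 with h | h
    · exact hx₀min' y ⟨hy0, h.symm⟩
    · rcases eq_or_lt_of_le hxs1.2 with hxe | hxe
      · have h1 : f x₀ ≤ f xs := hx₀min' xs ⟨hxs0, hxe⟩
        have h2 : f xs ≤ f y := hxsmin' y ⟨hy0, by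
          constructor <;> [linarith [hy1.1]; linarith [hy1.2]]⟩
        linarith
      · set t := (y 1 - (a₂ + r / 2)) / (y 1 - xs 1) with ht
        have hden : 0 < y 1 - xs 1 := by linarith
        have ht0 : 0 < t := div_pos (by linarith) hden
        have ht1 : t < 1 := (div_lt_one hden).2 (by linarith)
        set p := t • xs + (1 - t) • y with hp
        have hpc : ∀ i, p i = t * xs i + (1 - t) * y i := by
          intro i
          simp [hp, PiLp.add_apply, PiLp.smul_apply, smul_eq_mul]
        have hp1 : p 1 = a₂ + r / 2 := by
          rw [hpc 1, ht]
          field_simp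
          ring
        have hp0 : p 0 ∈ Set.Icc a₁ (a₁ + r) := by
          rw [hpc 0]
          constructor
          · nlinarith [hxs0.1, hy0.1, ht0.le, ht1.le]
          · nlinarith [hxs0.2, hy0.2, ht0.le, ht1.le]
        have hpK : p ∈ rect2 a₁ a₂ r r := ⟨hp0, by
          rw [hp1]; constructor <;> linarith⟩
        have hconvp : f p ≤ t * f xs + (1 - t) * f y :=
          hconv.2 (Set.mem_univ xs) (Set.mem_univ y) ht0.le (by linarith) (by ring)
        have hxsp : f xs ≤ f p := hxsmin' p hpK
        have hpy : f p ≤ f y := by nlinarith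
        have := hx₀min' p ⟨hp0, hp1⟩
        linarith
  apply le_antisymm
  · exact le_csInf ⟨f x₀, x₀, hx₀Q, rfl⟩ (by rintro b ⟨y, hy, rfl⟩; exact key y hy)
  · exact csInf_le ⟨f x₀, by rintro b ⟨y, hy, rfl⟩; exact key y hy⟩ ⟨x₀, hx₀Q, rfl⟩
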